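/- arXiv:2211.00973 — 5 statements merged into one kernel-verified Lean document; each statement's English description precedes it below -/
import Mathlib

section
/- Let E ⊆ X, let V ∈ E, and let x : X → Bool. Then #_φ^E(x) ≤ #_φ^{E∖{V}}(x) ≤ #_φ^E(x) + #_φ^E(x[V ↦ ¬x(V)]), where x[V ↦ ¬x(V)] is the valuation obtained from x by flipping the value at V. -/
/-- The set of valuations agreeing with `x` on `E` (the equivalence class `[x]_E`). -/
def equivClass {X : Type*} (E : Set X) (x : X → Bool) : Set (X → Bool) :=
  {x' | ∀ v ∈ E, x' v = x v}

/-- The induced set `I_φ(x) = {y | ∃ z, φ x y z}`. -/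
def induced {X Y Z : Type*} (φ : (X → Bool) → (Y → Bool) → (Z → Bool) → Prop)
    (x : X → Bool) : Set (Y → Bool) :=
  {y | ∃ z, φ x y z}

/-- The induced set of a partial witness, `I_φ^E(x) = ⋃_{x' ∈ [x]_E} I_φ(x')`. -/
def inducedOn {X Y Z : Type*} (φ : (X → Bool) → (Y → Bool) → (Z → Bool) → Prop)
    (E : Set X) (x : X → Bool) : Set (Y → Bool) :=
  ⋃ x' ∈ equivClass E x, induced φ x'

/-- The count `#_φ(x) = |I_φ(x)|`. -/
noncomputable def mcount {X Y Z : Type*} (φ : (X → Bool) → (Y → Bool) → (Z → Bool) → Prop)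
    (x : X → Bool) : ℕ :=
  (induced φ x).ncard

/-- The partial count `#_φ^E(x) = |I_φ^E(x)|`. -/
noncomputable def mcountOn {X Y Z : Type*} (φ : (X → Bool) → (Y → Bool) → (Z → Bool) → Prop)
    (E : Set X) (x : X → Bool) : ℕ :=
  (inducedOn φ E x).ncard

/-- Models projected onto the witness variables `X`. -/
def modX {X Y Z : Type*} (φ : (X → Bool) → (Y → Bool) → (Z → Bool) → Prop) :
    Set (X → Bool) :=
  {x | ∃ y z, φ x y z}

/-- Models projected onto the counting variables `Y`. -/
def modY {X Y Z : Type*} (φ : (X → Bool) → (Y → Bool) → (Z → Bool) → Prop) :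
    Set (Y → Bool) :=
  {y | ∃ x z, φ x y z}

theorem relaxing_bounds_each
    {X Y Z : Type*} [Fintype X] [Fintype Y] [Fintype Z] [DecidableEq X]
    (φ : (X → Bool) → (Y → Bool) → (Z → Bool) → Prop)
    (E : Set X) (V : X) (hV : V ∈ E) (x : X → Bool) :
    mcountOn φ E x ≤ mcountOn φ (E \ {V}) x ∧
      mcountOn φ (E \ {V}) x ≤
        mcountOn φ E x + mcountOn φ E (Function.update x V (!x V)) := by
  have hunion : inducedOn φ (E \ {V}) x =
      inducedOn φ E x ∪ inducedOn φ E (Function.update x V (!x V)) := by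
    have hE : equivClass (E \ {V}) x =
        equivClass E x ∪ equivClass E (Function.update x V (!x V)) := by
      ext x'
      constructor
      · intro h
        by_cases hv : x' V = x V
        · left
          intro v hvE
          by_cases hvV : v = V
          · subst hvV; exact hv
          · exact h v ⟨hvE, hvV⟩
        · right
          intro v hvE
          by_cases hvV : v = V
          · subst hvV
            simp only [Function.update_self]
            cases hxv : x v <;> cases hx'v : x' v <;> simp_all
          · rw [Function.update_of_ne hvV]
            exact h v ⟨hvE, hvV⟩
      · rintro (h | h) v ⟨hvE, hvV⟩
        · exact h v hvE
        · rw [h v hvE, Function.update_of_ne hvV]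
    unfold inducedOn
    rw [hE, Set.biUnion_union]
  have hfin : ∀ (E' : Set X) (x' : X → Bool), (inducedOn φ E' x').Finite := by
    intro E' x'
    exact Set.toFinite _
  constructor
  · apply Set.ncard_le_ncard _ (hfin _ _)
    rw [hunion]
    exact Set.subset_union_left
  · unfold mcountOn
    rw [hunion]
    exact le_trans (Set.ncard_union_le _ _) le_rfl
end

section
/- Termination of the CEGAR loop with an exact oracle: let φ_0 = φ and, for i < k, let φ_{i+1} = φ_i ∧ ¬[x_i]_{E_i} for some E_i ⊆ X and some x_i ∈ Mod_X(φ_i); then the number of iterations is bounded by the projected model count, i.e., k ≤ |Mod_X(φ)|. -/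
theorem cegar_terminates
    {X Y Z : Type*} [Fintype X] [Fintype Y] [Fintype Z]
    (φ : (X → Bool) → (Y → Bool) → (Z → Bool) → Prop)
    (k : ℕ)
    (φs : ℕ → (X → Bool) → (Y → Bool) → (Z → Bool) → Prop)
    (xs : ℕ → X → Bool) (Es : ℕ → Set X)
    (h0 : φs 0 = φ)
    (hstep : ∀ i < k,
      φs (i + 1) = fun x' y z => φs i x' y z ∧ x' ∉ equivClass (Es i) (xs i))
    (hmem : ∀ i < k, xs i ∈ modX (φs i)) :
    k ≤ (modX φ).ncard := by
  -- monotonicity: models of later formulas are models of earlier ones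
  have mono : ∀ i ≤ k, modX (φs i) ⊆ modX φ := by
    intro i hi
    induction i with
    | zero => rw [h0]
    | succ n ih =>
      intro x hx
      apply ih (Nat.le_of_succ_le hi)
      obtain ⟨y, z, hxyz⟩ := hx
      rw [hstep n (Nat.lt_of_succ_le hi)] at hxyz
      exact ⟨y, z, hxyz.1⟩
  have sub : ∀ i j, i < j → j ≤ k → modX (φs j) ⊆ modX (φs (i+1)) := by
    intro i j hij hjk
    induction j with
    | zero => omega
    | succ n ih =>
      rcases Nat.lt_or_ge i n with h | h
      · intro x hx
        apply ih (by omega) (by omega)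
        obtain ⟨y, z, hxyz⟩ := hx
        rw [hstep n (by omega)] at hxyz
        exact ⟨y, z, hxyz.1⟩
      · have : i = n := by omega
        subst this
        exact subset_rfl
  have hinj : ∀ i j, i < j → j < k → xs i ≠ xs j := by
    intro i j hij hjk hne
    have hj : xs j ∈ modX (φs (i+1)) := sub i j hij (le_of_lt hjk) (hmem j hjk)
    obtain ⟨y, z, hxyz⟩ := hj
    rw [hstep i (by omega)] at hxyz
    exact hxyz.2 (hne ▸ fun v _ => rfl)
  have hfin : (modX φ).Finite := Set.toFinite _
  apply Set.le_ncard_of_inj_on_range xs (fun i hi => mono i (le_of_lt hi) (hmem i hi))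
    (fun i hi j hj hij => ?_) hfin
  by_contra hne
  rcases Nat.lt_or_ge i j with h | h
  · exact hinj i j h hj hij
  · exact hinj j i (by omega) hi hij.symm
end

section
/- Blocked classes are bounded (Lemma on bounded unions): let φ_0 = φ and, for i < k, let φ_{i+1} = φ_i ∧ ¬[x_i]_{E_i} for valuations x_i : X → Bool and sets E_i ⊆ X, and let (n_i)_{i<k} be a nondecreasing sequence of natural numbers such that the blocked generalizations are n_i-bounding, i.e., #_{φ_i}^{E_i}(x_i) ≤ n_i for each i < k. Then every valuation x' ∈ ⋃_{i<k} [x_i]_{E_i} satisfies #_φ(x') ≤ n_{k-1}. -/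
theorem blocked_classes_bounded
    {X Y Z : Type*} [Fintype X] [Fintype Y] [Fintype Z]
    (φ : (X → Bool) → (Y → Bool) → (Z → Bool) → Prop)
    (k : ℕ)
    (φs : ℕ → (X → Bool) → (Y → Bool) → (Z → Bool) → Prop)
    (xs : ℕ → X → Bool) (Es : ℕ → Set X) (ns : ℕ → ℕ)
    (h0 : φs 0 = φ)
    (hstep : ∀ i < k,
      φs (i + 1) = fun x' y z => φs i x' y z ∧ x' ∉ equivClass (Es i) (xs i))
    (hmono : ∀ i, ∀ j, i ≤ j → j < k → ns i ≤ ns j)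
    (hbound : ∀ i < k, mcountOn (φs i) (Es i) (xs i) ≤ ns i) :
    ∀ x' ∈ ⋃ i < k, equivClass (Es i) (xs i), mcount φ x' ≤ ns (k - 1) := by

  intro x' hx'
  simp only [Set.mem_iUnion] at hx'
  obtain ⟨i0, hi0, hmem0⟩ := hx'
  -- take the least such index
  classical
  have hex : ∃ i, i < k ∧ x' ∈ equivClass (Es i) (xs i) := ⟨i0, hi0, hmem0⟩
  set i := Nat.find hex with hi
  obtain ⟨hik, hmem⟩ := Nat.find_spec hex
  have hmin : ∀ j < i, x' ∉ equivClass (Es j) (xs j) := by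
    intro j hj hmemj
    exact Nat.find_min hex hj ⟨lt_trans hj hik, hmemj⟩
  -- φ x' y z implies φs j x' y z for j ≤ i
  have key : ∀ j ≤ i, ∀ y z, φ x' y z → φs j x' y z := by
    intro j
    induction j with
    | zero => intro _ y z h; rw [h0]; exact h
    | succ j ih =>
      intro hji y z h
      have hjk : j < k := lt_of_lt_of_le (Nat.lt_of_succ_le hji) (le_of_lt hik)
      rw [hstep j hjk]
      exact ⟨ih (le_of_lt (Nat.lt_of_succ_le hji)) y z h,
        hmin j (Nat.lt_of_succ_le hji)⟩
  have hsub : induced φ x' ⊆ inducedOn (φs i) (Es i) (xs i) := by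
    rintro y ⟨z, hz⟩
    exact Set.mem_biUnion hmem ⟨z, key i le_rfl y z hz⟩
  have h1 : mcount φ x' ≤ mcountOn (φs i) (Es i) (xs i) :=
    Set.ncard_le_ncard hsub (Set.toFinite _)
  have h2 : ns i ≤ ns (k - 1) :=
    hmono i (k - 1) (Nat.le_sub_one_of_lt hik)
      (Nat.sub_lt (Nat.pos_of_ne_zero (by omega)) one_pos)
  exact le_trans (le_trans h1 (hbound i hik)) h2
end

section
/- Correctness of the CEGAR algorithm with an exact model-counting oracle: let φ_0 = φ and, for i < k, let φ_{i+1} = φ_i ∧ ¬[x_i]_{E_i} for valuations x_i : X → Bool and sets E_i ⊆ X; let n_m be a natural number and x_m ∈ Mod_X(φ) with #_φ(x_m) = n_m. Assume that (i) for each i < k, #_{φ_i}^{E_i}(x_i) ≤ n_m, and (ii) |Mod_Y(φ_k)| ≤ n_m. Then n_m = max_{x ∈ Mod_X(φ)} #_φ(x), i.e., x_m is a solution of the MaxSharpSAT problem for φ. -/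
theorem cegar_correct_exact
    {X Y Z : Type*} [Fintype X] [Fintype Y] [Fintype Z]
    (φ : (X → Bool) → (Y → Bool) → (Z → Bool) → Prop)
    (k : ℕ)
    (φs : ℕ → (X → Bool) → (Y → Bool) → (Z → Bool) → Prop)
    (xs : ℕ → X → Bool) (Es : ℕ → Set X)
    (nm : ℕ) (xm : X → Bool)
    (h0 : φs 0 = φ)
    (hstep : ∀ i < k,
      φs (i + 1) = fun x' y z => φs i x' y z ∧ x' ∉ equivClass (Es i) (xs i))
    (hxm : xm ∈ modX φ) (hnm : mcount φ xm = nm)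
    (hbound : ∀ i < k, mcountOn (φs i) (Es i) (xs i) ≤ nm)
    (hfinal : (modY (φs k)).ncard ≤ nm) :
    IsGreatest ((fun x => mcount φ x) '' modX φ) nm := by
  constructor
  · exact ⟨xm, hxm, hnm⟩
  · rintro n ⟨x, hx, rfl⟩
    -- key: for i ≤ k, if x is not blocked before i, then φs i x = φ x
    have key : ∀ i ≤ k, (∀ j < i, x ∉ equivClass (Es j) (xs j)) →
        ∀ y z, φ x y z → φs i x y z := by
      intro i
      induction i with
      | zero => intro _ _ y z h; rw [h0]; exact h
      | succ i ih =>
        intro hik hnb y z h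
        rw [hstep i (by omega)]
        exact ⟨ih (by omega) (fun j hj => hnb j (by omega)) y z h,
          hnb i (by omega)⟩
    by_cases hb : ∃ i < k, x ∈ equivClass (Es i) (xs i)
    · -- least such i
      obtain ⟨i, hik, hmem, hleast⟩ : ∃ i < k, x ∈ equivClass (Es i) (xs i) ∧
          ∀ j < i, x ∉ equivClass (Es j) (xs j) := by
        classical
        refine ⟨Nat.find hb, (Nat.find_spec hb).1, (Nat.find_spec hb).2, ?_⟩
        intro j hj hmem
        exact Nat.find_min hb hj ⟨lt_trans hj (Nat.find_spec hb).1, hmem⟩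
      refine le_trans ?_ (hbound i hik)
      apply Set.ncard_le_ncard _ (Set.toFinite _)
      intro y ⟨z, hyz⟩
      exact Set.mem_biUnion hmem ⟨z, key i (le_of_lt hik) hleast y z hyz⟩
    · push_neg at hb
      refine le_trans ?_ hfinal
      apply Set.ncard_le_ncard _ (Set.toFinite _)
      intro y ⟨z, hyz⟩
      exact ⟨x, z, key k le_rfl hb y z hyz⟩
end

section
/- Correctness of symmetry breaking for MaxSharpSAT: let G be a set of signed permutations of X (each given by a permutation π of X and a sign map s : X → Bool acting by (σ·x)(V) = x(π(V)) XOR s(V)), each of which is a symmetry of φ (φ (σ·x) y z ↔ φ x y z for all x, y, z). Let ψ : (X → Bool) → Prop be a symmetry breaking predicate such that for every x ∈ Mod_X(φ) there exists σ ∈ G with ψ (σ·x). Then solving MaxSharpSAT on φ ∧ ψ yields the same optimum as on φ: max_{x ∈ Mod_X(φ∧ψ)} #_{φ∧ψ}(x) = max_{x ∈ Mod_X(φ)} #_φ(x), where φ ∧ ψ is the predicate (x,y,z) ↦ φ x y z ∧ ψ x. -/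
/-- Action of a signed permutation `(π, s)` of the witness variables on a
valuation: `(σ·x)(V) = x(π(V)) XOR s(V)`. -/
def sgnPermAct {X : Type*} (π : Equiv.Perm X) (s : X → Bool)
    (x : X → Bool) : X → Bool :=
  fun V => xor (x (π V)) (s V)

theorem symmetry_breaking_correct
    {X Y Z : Type*} [Fintype X] [Fintype Y] [Fintype Z]
    (φ : (X → Bool) → (Y → Bool) → (Z → Bool) → Prop)
    (G : Set (Equiv.Perm X × (X → Bool)))
    (hsym : ∀ σ ∈ G, ∀ (x : X → Bool) (y : Y → Bool) (z : Z → Bool),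
      φ (sgnPermAct σ.1 σ.2 x) y z ↔ φ x y z)
    (ψ : (X → Bool) → Prop)
    (hbreak : ∀ x ∈ modX φ, ∃ σ ∈ G, ψ (sgnPermAct σ.1 σ.2 x)) :
    sSup ((fun x => mcount (fun x' y z => φ x' y z ∧ ψ x') x) ''
        modX (fun x' y z => φ x' y z ∧ ψ x'))
      = sSup ((fun x => mcount φ x) '' modX φ) := by
  congr 1
  ext n
  constructor
  · rintro ⟨x, ⟨y, z, hφ, hψ⟩, rfl⟩
    refine ⟨x, ⟨y, z, hφ⟩, ?_⟩
    unfold mcount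
    refine congrArg Set.ncard ?_
    ext y'
    constructor
    · rintro ⟨z', h⟩
      exact ⟨z', h, hψ⟩
    · rintro ⟨z', h, -⟩
      exact ⟨z', h⟩
  · rintro ⟨x, hx, rfl⟩
    obtain ⟨σ, hσG, hψσ⟩ := hbreak x hx
    obtain ⟨y, z, hφ⟩ := hx
    refine ⟨sgnPermAct σ.1 σ.2 x, ⟨y, z, (hsym σ hσG x y z).mpr hφ, hψσ⟩, ?_⟩
    unfold mcount
    refine congrArg Set.ncard ?_
    ext y'
    constructor
    · rintro ⟨z', h, _⟩
      exact ⟨z', (hsym σ hσG x y' z').mp h⟩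
    · rintro ⟨z', h⟩
      exact ⟨z', (hsym σ hσG x y' z').mpr h, hψσ⟩
end
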